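/- Let n be a positive integer and let E_1, E_2, …, E_n be independent real random variables such that E_i is exponentially distributed with rate i (density t ↦ i·e^{−i t} on [0,∞)). Then the sum E_1 + E_2 + ⋯ + E_n has the same distribution as the maximum of n i.i.d. rate-1 exponential random variables; equivalently, for every x ≥ 0, P(E_1 + ⋯ + E_n ≤ x) = (1 − e^{−x})^n. -/

import Mathlib

open MeasureTheory ProbabilityTheory Real

/-- The law of an exponential random variable with rate `a`:
the measure on `ℝ` with density `t ↦ a * exp (-a * t)` on `[0, ∞)`. -/
noncomputable def expLaw (a : ℝ) : Measure ℝ :=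
  volume.withDensity (fun t => ENNReal.ofReal (if 0 ≤ t then a * Real.exp (-a * t) else 0))

lemma ftc_step (k : ℕ) (x : ℝ) :
    ∫ t in (0:ℝ)..x, ((k:ℝ)+1) * Real.exp (-t) * (Real.exp (-t) - Real.exp (-x))^k
      = (1 - Real.exp (-x))^(k+1) := by
  have hderiv : ∀ t ∈ Set.uIcc (0:ℝ) x,
      HasDerivAt (fun s => -(Real.exp (-s) - Real.exp (-x))^(k+1))
        (((k:ℝ)+1) * Real.exp (-t) * (Real.exp (-t) - Real.exp (-x))^k) t := by
    intro t _
    have hexp : HasDerivAt (fun s : ℝ => Real.exp (-s)) (-Real.exp (-t)) t := by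
      simpa using (hasDerivAt_neg t).exp
    have h1 := (hexp.sub_const (Real.exp (-x))).fun_pow (k+1)
    have h2 := h1.fun_neg
    refine h2.congr_deriv ?_
    push_cast
    ring_nf
  rw [intervalIntegral.integral_eq_sub_of_hasDerivAt hderiv
    ((Continuous.intervalIntegrable (by continuity) _ _))]
  simp [Real.exp_zero, zero_pow (Nat.succ_ne_zero k)]

lemma conv_step {Ω : Type*} [MeasureSpace Ω] [IsProbabilityMeasure (ℙ : Measure Ω)]
    (k : ℕ) (S T : Ω → ℝ) (hS : Measurable S) (hT : Measurable T)
    (hST : IndepFun T S ℙ)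
    (hSlaw : ∀ y : ℝ, 0 ≤ y → ℙ {ω | S ω ≤ y} = ENNReal.ofReal ((1 - Real.exp (-y))^k))
    (hSnn : ∀ᵐ ω ∂ℙ, 0 ≤ S ω)
    (hTlaw : Measure.map T ℙ = expLaw ((k:ℝ)+1)) :
    ∀ x : ℝ, 0 ≤ x →
      ℙ {ω | S ω + T ω ≤ x} = ENNReal.ofReal ((1 - Real.exp (-x))^(k+1)) := by
  intro x hx
  -- the CDF of S, as a function of the threshold
  have hG : ∀ t : ℝ, (Measure.map S ℙ) (Set.Iic (x - t))
      = if t ≤ x then ENNReal.ofReal ((1 - Real.exp (-(x - t)))^k) else 0 := by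
    intro t
    rw [Measure.map_apply hS measurableSet_Iic]
    by_cases ht : t ≤ x
    · rw [if_pos ht]
      exact hSlaw (x - t) (by linarith)
    · rw [if_neg ht]
      refine measure_mono_null ?_ (ae_iff.mp hSnn)
      intro ω hω
      simp only [Set.mem_preimage, Set.mem_Iic] at hω
      simp only [Set.mem_setOf_eq, not_le]
      linarith [not_le.mp ht]
  have hpair : Measurable (fun ω => (T ω, S ω)) := hT.prodMk hS
  have hset : MeasurableSet {p : ℝ × ℝ | p.1 + p.2 ≤ x} :=
    measurableSet_le (by fun_prop) measurable_const
  have step1 : ℙ {ω | S ω + T ω ≤ x}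
      = (Measure.map (fun ω => (T ω, S ω)) ℙ) {p : ℝ × ℝ | p.1 + p.2 ≤ x} := by
    rw [Measure.map_apply hpair hset]
    congr 1
    ext ω
    simp [add_comm]
  rw [step1, (indepFun_iff_map_prod_eq_prod_map_map hT.aemeasurable hS.aemeasurable).mp hST,
    Measure.prod_apply hset]
  have hpre : ∀ t : ℝ, (Prod.mk t ⁻¹' {p : ℝ × ℝ | p.1 + p.2 ≤ x}) = Set.Iic (x - t) := by
    intro t; ext s; simp [Set.mem_Iic, le_sub_iff_add_le']
  have step2 : ∫⁻ t, (Measure.map S ℙ) (Prod.mk t ⁻¹' {p : ℝ × ℝ | p.1 + p.2 ≤ x})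
        ∂(Measure.map T ℙ)
      = ∫⁻ t, (if t ≤ x then ENNReal.ofReal ((1 - Real.exp (-(x - t)))^k) else 0)
        ∂(Measure.map T ℙ) := by
    refine lintegral_congr fun t => ?_
    rw [hpre t, hG t]
  rw [step2, hTlaw]
  unfold expLaw
  have hd : Measurable (fun t : ℝ => ENNReal.ofReal
      (if 0 ≤ t then ((k:ℝ)+1) * Real.exp (-((k:ℝ)+1) * t) else 0)) := by
    apply Measurable.ennreal_ofReal
    exact Measurable.ite measurableSet_Ici (by fun_prop) measurable_const
  have hGm : Measurable (fun t : ℝ =>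
      (if t ≤ x then ENNReal.ofReal ((1 - Real.exp (-(x - t)))^k) else 0 : ENNReal)) := by
    refine Measurable.ite measurableSet_Iic ?_ measurable_const
    exact Measurable.ennreal_ofReal (by fun_prop)
  rw [lintegral_withDensity_eq_lintegral_mul _ hd hGm]
  -- the integrand equals an indicator
  have hind : (fun t : ℝ => (ENNReal.ofReal
        (if 0 ≤ t then ((k:ℝ)+1) * Real.exp (-((k:ℝ)+1) * t) else 0)
        * (if t ≤ x then ENNReal.ofReal ((1 - Real.exp (-(x - t)))^k) else 0)))
      = Set.indicator (Set.Icc 0 x)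
        (fun t => ENNReal.ofReal (((k:ℝ)+1) * Real.exp (-t) * (Real.exp (-t) - Real.exp (-x))^k)) := by
    ext t
    by_cases h0 : 0 ≤ t
    · by_cases h1 : t ≤ x
      · rw [Set.indicator_of_mem (Set.mem_Icc.mpr ⟨h0, h1⟩), if_pos h0, if_pos h1,
          ← ENNReal.ofReal_mul (by positivity)]
        congr 1
        have e1 : Real.exp (-((k:ℝ)+1) * t) = Real.exp (-t) * (Real.exp (-t))^k := by
          rw [← Real.exp_nat_mul, ← Real.exp_add]
          congr 1; ring
        have e2 : Real.exp (-t) * (1 - Real.exp (-(x - t))) = Real.exp (-t) - Real.exp (-x) := by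
          rw [mul_sub, mul_one, ← Real.exp_add]
          congr 2; ring
        calc ((k:ℝ)+1) * Real.exp (-((k:ℝ)+1) * t) * (1 - Real.exp (-(x - t)))^k
            = ((k:ℝ)+1) * Real.exp (-t) * ((Real.exp (-t))^k * (1 - Real.exp (-(x - t)))^k) := by
              rw [e1]; ring
          _ = ((k:ℝ)+1) * Real.exp (-t) * (Real.exp (-t) * (1 - Real.exp (-(x - t))))^k := by
              rw [mul_pow]
          _ = ((k:ℝ)+1) * Real.exp (-t) * (Real.exp (-t) - Real.exp (-x))^k := by rw [e2]
      · rw [Set.indicator_of_notMem (fun hmem => h1 hmem.2), if_neg h1, mul_zero]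
    · rw [Set.indicator_of_notMem (fun hmem => h0 hmem.1), if_neg h0]
      simp
  simp only [Pi.mul_apply]
  rw [lintegral_congr fun t => congrFun hind t, lintegral_indicator measurableSet_Icc _]
  have hcont : Continuous (fun t : ℝ =>
      ((k:ℝ)+1) * Real.exp (-t) * (Real.exp (-t) - Real.exp (-x))^k) := by continuity
  have hint : IntegrableOn (fun t : ℝ =>
      ((k:ℝ)+1) * Real.exp (-t) * (Real.exp (-t) - Real.exp (-x))^k) (Set.Icc 0 x) volume :=
    hcont.integrableOn_Icc
  have hnn : 0 ≤ᵐ[volume.restrict (Set.Icc 0 x)] (fun t : ℝ =>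
      ((k:ℝ)+1) * Real.exp (-t) * (Real.exp (-t) - Real.exp (-x))^k) := by
    refine Filter.eventually_of_mem (self_mem_ae_restrict measurableSet_Icc) fun t ht => ?_
    have : Real.exp (-x) ≤ Real.exp (-t) := Real.exp_le_exp.2 (by linarith [ht.2])
    have hb : (0:ℝ) ≤ Real.exp (-t) - Real.exp (-x) := by linarith
    positivity
  rw [← MeasureTheory.ofReal_integral_eq_lintegral_ofReal hint hnn]
  congr 1
  rw [MeasureTheory.integral_Icc_eq_integral_Ioc, ← intervalIntegral.integral_of_le hx]
  exact ftc_step k x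


/-- If `E 1, …, E n` are independent with `E i` exponential of rate `i`,
then `E 1 + ⋯ + E n` is distributed as the maximum of `n` i.i.d. rate-1 exponentials:
for every `x ≥ 0`, `P(E 1 + ⋯ + E n ≤ x) = (1 - exp (-x))^n`. -/
theorem stmt_0 {Ω : Type*} [MeasureSpace Ω] [IsProbabilityMeasure (ℙ : Measure Ω)]
    (n : ℕ) (hn : 0 < n) (E : Fin n → Ω → ℝ)
    (hmeas : ∀ i, Measurable (E i))
    (hindep : iIndepFun E ℙ)
    (hlaw : ∀ i : Fin n, Measure.map (E i) ℙ = expLaw ((i : ℕ) + 1)) :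
    ∀ x : ℝ, 0 ≤ x →
      ℙ {ω | ∑ i, E i ω ≤ x} = ENNReal.ofReal ((1 - Real.exp (-x)) ^ n) := by
  classical
  -- each E i is a.e. nonnegative
  have hnn : ∀ i, ∀ᵐ ω ∂ℙ, 0 ≤ E i ω := by
    intro i
    rw [ae_iff]
    have : {ω | ¬ 0 ≤ E i ω} = E i ⁻¹' Set.Iio 0 := by
      ext ω; simp [not_le]
    rw [this, ← Measure.map_apply (hmeas i) measurableSet_Iio, hlaw i]
    unfold expLaw
    rw [withDensity_apply _ measurableSet_Iio]
    rw [setLIntegral_congr_fun (g := fun _ => (0:ENNReal)) measurableSet_Iio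
      (fun t ht => by simp [not_le.mpr (Set.mem_Iio.mp ht)])]
    simp
  -- the main induction
  have main : ∀ k : ℕ, k ≤ n → ∀ x : ℝ, 0 ≤ x →
      ℙ {ω | ∑ i ∈ Finset.univ.filter (fun i : Fin n => (i:ℕ) < k), E i ω ≤ x}
        = ENNReal.ofReal ((1 - Real.exp (-x)) ^ k) := by
    intro k
    induction k with
    | zero =>
      intro _ x hx
      have : {ω | ∑ i ∈ Finset.univ.filter (fun i : Fin n => (i:ℕ) < 0), E i ω ≤ x}
          = Set.univ := by
        ext ω; simp [Finset.filter_false_of_mem, hx]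
      rw [this]
      simp
    | succ k ih =>
      intro hk x hx
      have hkn : k < n := hk
      set j : Fin n := ⟨k, hkn⟩ with hj
      set s : Finset (Fin n) := Finset.univ.filter (fun i : Fin n => (i:ℕ) < k) with hs
      have hjs : j ∉ s := by simp [hs, hj]
      have hsucc : Finset.univ.filter (fun i : Fin n => (i:ℕ) < k+1) = insert j s := by
        ext i
        simp only [Finset.mem_filter, Finset.mem_univ, true_and, Finset.mem_insert, hs, hj]
        constructor
        · intro h
          rcases Nat.lt_succ_iff_lt_or_eq.mp h with h | h
          · exact Or.inr (by simpa using h)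
          · exact Or.inl (Fin.ext h)
        · rintro (rfl | h)
          · exact Nat.lt_succ_self k
          · exact Nat.lt_succ_of_lt (by simpa using h)
      set S : Ω → ℝ := fun ω => ∑ i ∈ s, E i ω with hSdef
      have hSmeas : Measurable S := Finset.measurable_sum s (fun i _ => hmeas i)
      have hSnn : ∀ᵐ ω ∂ℙ, 0 ≤ S ω := by
        have := (ae_all_iff.mpr hnn)
        filter_upwards [this] with ω hω
        exact Finset.sum_nonneg fun i _ => hω i
      have hST : IndepFun (E j) S ℙ := by
        have h1 := hindep.indepFun_finset_sum_of_notMem hmeas hjs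
        have h2 : (∑ i ∈ s, E i) = S := by ext ω; simp [hSdef, Finset.sum_apply]
        rw [h2] at h1
        exact h1.symm
      have hTlaw : Measure.map (E j) ℙ = expLaw ((k:ℝ)+1) := by
        rw [hlaw j]
      have := conv_step k S (E j) hSmeas (hmeas j) hST (fun y hy => ih (le_of_lt hkn) y hy)
        hSnn hTlaw x hx
      rw [← this]
      congr 1
      ext ω
      rw [hsucc]
      simp only [Set.mem_setOf_eq]
      rw [Finset.sum_insert hjs]
      simp only [hSdef]
      constructor <;> intro h <;> linarith
  have := main n le_rfl
  intro x hx
  have hfull : Finset.univ.filter (fun i : Fin n => (i:ℕ) < n) = Finset.univ := by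
    apply Finset.filter_true_of_mem
    intro i _
    exact i.isLt
  have h2 := this x hx
  rw [hfull] at h2
  exact h2
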